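/- Let A be a subring of a commutative ring B, and let T = A + X·B[X] be the subring of B[X] of polynomials with constant coefficient in A. A polynomial f = a_0 + a_1X + … + a_nX^n ∈ T is a unit of T if and only if a_0 is a unit of A and a_1, a_2, …, a_n are nilpotent elements of B. -/

import Mathlib

/-- The polynomial composite `A + X·B[X]`: the subring of `B[X]` of polynomials
whose constant coefficient lies in `A`. -/
def Subring.composite {B : Type*} [CommRing B] (A : Subring B) : Subring (Polynomial B) where
  carrier := {f : Polynomial B | f.coeff 0 ∈ A}
  mul_mem' {f g} hf hg := by
    simp only [Set.mem_setOf_eq, Polynomial.mul_coeff_zero] at *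
    exact mul_mem hf hg
  one_mem' := by
    simp only [Set.mem_setOf_eq, Polynomial.coeff_one_zero]
    exact one_mem A
  add_mem' {f g} hf hg := by
    simp only [Set.mem_setOf_eq, Polynomial.coeff_add] at *
    exact add_mem hf hg
  zero_mem' := by
    simp only [Set.mem_setOf_eq, Polynomial.coeff_zero]
    exact zero_mem A
  neg_mem' {f} hf := by
    simp only [Set.mem_setOf_eq, Polynomial.coeff_neg] at *
    exact neg_mem hf

theorem Subring.mem_composite {B : Type*} [CommRing B] (A : Subring B) (f : Polynomial B) :
    f ∈ A.composite ↔ f.coeff 0 ∈ A := Iff.rfl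

/-- A polynomial `f ∈ T = A + X·B[X]` is a unit of `T` iff its constant coefficient is a
unit of `A` and all its higher coefficients are nilpotent in `B`. -/
theorem composite_isUnit_iff {B : Type*} [CommRing B] (A : Subring B)
    (f : Polynomial B) (hf : f ∈ A.composite) :
    IsUnit (⟨f, hf⟩ : A.composite) ↔
      IsUnit (⟨f.coeff 0, (A.mem_composite f).mp hf⟩ : A) ∧
        ∀ i : ℕ, i ≠ 0 → IsNilpotent (f.coeff i) := by
  constructor
  · rintro ⟨u, hu⟩
    have hmul : f * ((u⁻¹ : A.compositeˣ) : A.composite).1 = 1 := by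
      have := congrArg Subtype.val u.mul_inv
      rwa [hu] at this
    have hB : IsUnit f := IsUnit.of_mul_eq_one _ hmul
    refine ⟨?_, fun i hi => (Polynomial.isUnit_iff_coeff_isUnit_isNilpotent.mp hB).2 i hi⟩
    refine IsUnit.of_mul_eq_one ⟨(((u⁻¹ : A.compositeˣ) : A.composite)).1.coeff 0,
      (((u⁻¹ : A.compositeˣ) : A.composite)).2⟩ (Subtype.ext ?_)
    have := congrArg (fun p : Polynomial B => p.coeff 0) hmul
    simpa [Polynomial.mul_coeff_zero] using this
  · rintro ⟨hA, hnil⟩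
    have hB : IsUnit f := by
      rw [Polynomial.isUnit_iff_coeff_isUnit_isNilpotent]
      exact ⟨hA.map A.subtype, hnil⟩
    obtain ⟨v, hv⟩ := hB
    obtain ⟨w, hw⟩ := hA
    have hmul : f * ((v⁻¹ : (Polynomial B)ˣ) : Polynomial B) = 1 := by
      have := congrArg id v.mul_inv
      rwa [hv] at this
    have h0 : f.coeff 0 * ((v⁻¹ : (Polynomial B)ˣ) : Polynomial B).coeff 0 = 1 := by
      have := congrArg (fun p : Polynomial B => p.coeff 0) hmul
      simpa [Polynomial.mul_coeff_zero] using this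
    have hw0 : (w : A).1 = f.coeff 0 := congrArg Subtype.val hw
    have hg : ((v⁻¹ : (Polynomial B)ˣ) : Polynomial B).coeff 0 ∈ A := by
      have : ((v⁻¹ : (Polynomial B)ˣ) : Polynomial B).coeff 0 =
          ((w⁻¹ : Aˣ) : A).1 := by
        have hw1 : ((w⁻¹ : Aˣ) : A).1 * f.coeff 0 = 1 := by
          rw [← hw0]
          exact_mod_cast congrArg Subtype.val w.inv_mul
        calc ((v⁻¹ : (Polynomial B)ˣ) : Polynomial B).coeff 0
            = ((w⁻¹ : Aˣ) : A).1 * (f.coeff 0 *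
              ((v⁻¹ : (Polynomial B)ˣ) : Polynomial B).coeff 0) := by
              rw [← mul_assoc, hw1, one_mul]
          _ = ((w⁻¹ : Aˣ) : A).1 := by rw [h0, mul_one]
      rw [this]; exact ((w⁻¹ : Aˣ) : A).2
    exact IsUnit.of_mul_eq_one ⟨_, hg⟩ (Subtype.ext hmul)
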